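/- Define sequences α, β by α₁ = β₁ = 1/√(2ⁿ) and α_{k+1} = ((2^{n-1}-1)/2^{n-1})·α_k + ((2ⁿ-1)/2^{n-1})·β_k, β_{k+1} = -(1/2^{n-1})·α_k + ((2^{n-1}-1)/2^{n-1})·β_k. If θ satisfies sin²θ = 1/2ⁿ (with 0 < θ < π/2), then for all j ≥ 1, α_j = sin((2j-1)θ) and β_j = (1/√(2ⁿ-1))·cos((2j-1)θ). -/

import Mathlib

open Real

/-- Closed form for the amplitudes in Grover's algorithm with a unique
solution among `2ⁿ` items: with `sin²θ = 1/2ⁿ`, the recursively defined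
amplitude sequences satisfy `αⱼ = sin((2j-1)θ)` and
`βⱼ = (1/√(2ⁿ-1))·cos((2j-1)θ)` for all `j ≥ 1`. -/
theorem grover_amplitudes_closed_form (n : ℕ) (hn : 2 ≤ n)
    (θ : ℝ) (hθ₀ : 0 < θ) (hθ₁ : θ < π / 2)
    (hsin : Real.sin θ ^ 2 = 1 / 2 ^ n)
    (α β : ℕ → ℝ)
    (hα1 : α 1 = 1 / Real.sqrt (2 ^ n)) (hβ1 : β 1 = 1 / Real.sqrt (2 ^ n))
    (hαrec : ∀ k, 1 ≤ k →
      α (k + 1) = (((2 : ℝ) ^ (n - 1) - 1) / 2 ^ (n - 1)) * α k +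
        (((2 : ℝ) ^ n - 1) / 2 ^ (n - 1)) * β k)
    (hβrec : ∀ k, 1 ≤ k →
      β (k + 1) = -(1 / (2 : ℝ) ^ (n - 1)) * α k +
        (((2 : ℝ) ^ (n - 1) - 1) / 2 ^ (n - 1)) * β k) :
    ∀ j, 1 ≤ j →
      α j = Real.sin ((2 * (j : ℝ) - 1) * θ) ∧
      β j = (1 / Real.sqrt (2 ^ n - 1)) * Real.cos ((2 * (j : ℝ) - 1) * θ) := by
  set N : ℝ := 2 ^ n with hNdef
  set H : ℝ := 2 ^ (n - 1) with hHdef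
  have hH0 : (0 : ℝ) < H := by positivity
  have hN0 : (0 : ℝ) < N := by positivity
  have hHN : H * 2 = N := by
    rw [hHdef, hNdef, ← pow_succ]
    congr 1
    omega
  have hN4 : (4 : ℝ) ≤ N := by
    rw [hNdef]
    calc (4 : ℝ) = 2 ^ 2 := by norm_num
    _ ≤ 2 ^ n := by apply pow_le_pow_right₀ (by norm_num) hn
  have hN1 : (0 : ℝ) < N - 1 := by linarith
  have hsqrtN : Real.sqrt N * Real.sqrt N = N := Real.mul_self_sqrt hN0.le
  have hsqrtN1 : Real.sqrt (N - 1) * Real.sqrt (N - 1) = N - 1 :=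
    Real.mul_self_sqrt hN1.le
  have hsqrtN0 : 0 < Real.sqrt N := Real.sqrt_pos.mpr hN0
  have hsqrtN10 : 0 < Real.sqrt (N - 1) := Real.sqrt_pos.mpr hN1
  have hsinpos : 0 < Real.sin θ :=
    Real.sin_pos_of_pos_of_lt_pi hθ₀ (by linarith [Real.pi_pos])
  have hcospos : 0 < Real.cos θ := Real.cos_pos_of_mem_Ioo ⟨by linarith [Real.pi_pos], hθ₁⟩
  have hs : Real.sin θ = 1 / Real.sqrt N := by
    have : Real.sin θ = Real.sqrt (1 / N) := by
      rw [← hsin, Real.sqrt_sq hsinpos.le]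
    rw [this, one_div, one_div, Real.sqrt_inv]
  have hc : Real.cos θ = Real.sqrt (N - 1) / Real.sqrt N := by
    have hc2 : Real.cos θ ^ 2 = (N - 1) / N := by
      rw [Real.cos_sq', hsin]
      field_simp
    have : Real.cos θ = Real.sqrt ((N - 1) / N) := by
      rw [← hc2, Real.sqrt_sq hcospos.le]
    rw [this, Real.sqrt_div hN1.le]
  have hcos2 : Real.cos (2 * θ) = (H - 1) / H := by
    rw [Real.cos_two_mul', hsin, hc]
    rw [div_pow, Real.sq_sqrt hN1.le, Real.sq_sqrt hN0.le]
    field_simp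
    nlinarith
  have hsin2 : Real.sin (2 * θ) = Real.sqrt (N - 1) / H := by
    rw [Real.sin_two_mul, hs, hc]
    field_simp
    nlinarith
  intro j hj
  induction j, hj using Nat.le_induction with
  | base =>
    constructor
    · rw [hα1]
      push_cast
      rw [show (2 * (1 : ℝ) - 1) * θ = θ by ring, hs]
    · rw [hβ1]
      push_cast
      rw [show (2 * (1 : ℝ) - 1) * θ = θ by ring, hc]
      field_simp
  | succ k hk ih =>
    obtain ⟨ihα, ihβ⟩ := ih
    have hang : (2 * ((k : ℝ) + 1) - 1) * θ = (2 * (k : ℝ) - 1) * θ + 2 * θ := by ring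
    constructor
    · rw [hαrec k hk, ihα, ihβ]
      push_cast
      rw [hang, Real.sin_add, hcos2, hsin2]
      field_simp
      linear_combination (-(Real.cos ((2 * (k : ℝ) - 1) * θ))) * hsqrtN1
    · rw [hβrec k hk, ihα, ihβ]
      push_cast
      rw [hang, Real.cos_add, hcos2, hsin2]
      field_simp
      ring
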